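/- Let m ≥ 9 and let S be the numerical semigroup generated by m, m+1, ..., 2m-5. Then the set of pseudo-Frobenius numbers of S is {2m-4, 2m-3, 2m-2, 2m-1}; in particular the type of S is 4. -/

import Mathlib

lemma mem_closure_iff_aux (m : ℕ) (hm : 9 ≤ m) (n : ℕ) :
    n ∈ AddSubmonoid.closure (Set.Icc m (2 * m - 5)) ↔
      n = 0 ∨ (m ≤ n ∧ n ≤ 2 * m - 5) ∨ 2 * m ≤ n := by
  constructor
  · intro h
    induction h using AddSubmonoid.closure_induction with
    | mem x hx => rw [Set.mem_Icc] at hx; omega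
    | zero => omega
    | add a b _ _ ha hb => omega
  · intro h
    induction n using Nat.strong_induction_on with
    | _ n ih =>
      rcases h with h0 | h1 | h2
      · subst h0; exact zero_mem _
      · exact AddSubmonoid.subset_closure (Set.mem_Icc.mpr h1)
      · by_cases hc : n ≤ 3 * m - 5
        · have h1 : n = m + (n - m) := by omega
          rw [h1]
          exact add_mem (AddSubmonoid.subset_closure (Set.mem_Icc.mpr (by omega)))
            (AddSubmonoid.subset_closure (Set.mem_Icc.mpr (by omega)))
        · by_cases hd : n ≤ 4 * m - 10
          · have h1 : n = (n - (2 * m - 5)) + (2 * m - 5) := by omega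
            rw [h1]
            exact add_mem (AddSubmonoid.subset_closure (Set.mem_Icc.mpr (by omega)))
              (AddSubmonoid.subset_closure (Set.mem_Icc.mpr (by omega)))
          · have h1 : n = m + (n - m) := by omega
            rw [h1]
            exact add_mem (AddSubmonoid.subset_closure (Set.mem_Icc.mpr (by omega)))
              (ih (n - m) (by omega) (by omega))

theorem stmt_2 (m : ℕ) (hm : 9 ≤ m)
    (S : Set ℕ)
    (hS : S = {n : ℕ | n ∈ AddSubmonoid.closure (Set.Icc m (2 * m - 5))}) :
    {P : ℕ | P ∉ S ∧ ∀ s ∈ S, s ≠ 0 → P + s ∈ S} =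
      ({2 * m - 4, 2 * m - 3, 2 * m - 2, 2 * m - 1} : Set ℕ) ∧
    {P : ℕ | P ∉ S ∧ ∀ s ∈ S, s ≠ 0 → P + s ∈ S}.ncard = 4 := by
  have hmem : ∀ n, n ∈ S ↔ n = 0 ∨ (m ≤ n ∧ n ≤ 2 * m - 5) ∨ 2 * m ≤ n := by
    intro n
    rw [hS]
    exact mem_closure_iff_aux m hm n
  have key : {P : ℕ | P ∉ S ∧ ∀ s ∈ S, s ≠ 0 → P + s ∈ S} =
      ({2 * m - 4, 2 * m - 3, 2 * m - 2, 2 * m - 1} : Set ℕ) := by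
    ext P
    simp only [Set.mem_setOf_eq, Set.mem_insert_iff, Set.mem_singleton_iff]
    constructor
    · rintro ⟨hP, hall⟩
      rw [hmem] at hP
      push_neg at hP
      by_contra hcon
      push_neg at hcon
      -- so 1 ≤ P ≤ m - 1
      have hPle : 1 ≤ P ∧ P ≤ m - 1 := by omega
      by_cases h4 : P ≤ 4
      · have hs := hall (2 * m - 5) ((hmem _).mpr (by omega)) (by omega)
        rw [hmem] at hs
        omega
      · by_cases h5 : P ≤ m - 5
        · have hs := hall (2 * m - 4 - P) ((hmem _).mpr (by omega)) (by omega)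
          rw [hmem] at hs
          omega
        · have hs := hall m ((hmem _).mpr (by omega)) (by omega)
          rw [hmem] at hs
          omega
    · intro hP
      constructor
      · rw [hmem]; omega
      · intro s hs hs0
        rw [hmem] at hs ⊢
        omega
  refine ⟨key, ?_⟩
  rw [key]
  have : ({2 * m - 4, 2 * m - 3, 2 * m - 2, 2 * m - 1} : Set ℕ) =
      (({2 * m - 4, 2 * m - 3, 2 * m - 2, 2 * m - 1} : Finset ℕ) : Set ℕ) := by
    simp
  rw [this, Set.ncard_coe_finset]
  rw [Finset.card_insert_of_notMem (by simp; omega),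
    Finset.card_insert_of_notMem (by simp; omega),
    Finset.card_insert_of_notMem (by simp; omega), Finset.card_singleton]
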